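/- Under the Bounded-Coefficient Scheme Hypotheses, assume additionally that all the maps T_1, …, T_m and I_1, …, I_m are continuous. Then for each i = 1, …, m, lim_{n→∞} ‖x_n − T_iⁿ x_n‖ = 0. -/

import Mathlib

open Filter


private lemma stmt7_aux_conv (r c d : ℕ → ℝ) (hr : ∀ n, 0 ≤ r n)
    (hc : ∀ n, 0 ≤ c n) (hd : ∀ n, 0 ≤ d n)
    (hcs : Summable c) (hds : Summable d)
    (hrec : ∀ n, r (n + 1) ≤ (1 + c n) * r n + d n) :
    ∃ L, 0 ≤ L ∧ Tendsto r atTop (nhds L) := by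
  set R0 : ℝ := (r 0 + ∑' k, d k) * Real.exp (∑' k, c k) with hR0
  have htd : 0 ≤ ∑' k, d k := tsum_nonneg hd
  have htc : 0 ≤ ∑' k, c k := tsum_nonneg hc
  have hbd : ∀ n, r n ≤ R0 := by
    have key : ∀ n, r n ≤ (r 0 + ∑ k ∈ Finset.range n, d k) * ∏ k ∈ Finset.range n, (1 + c k) := by
      intro n
      induction n with
      | zero => simp
      | succ n ih =>
        have hP : (1:ℝ) ≤ ∏ k ∈ Finset.range n, (1 + c k) := by
          calc (1:ℝ) = ∏ _k ∈ Finset.range n, (1:ℝ) := by simp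
            _ ≤ ∏ k ∈ Finset.range n, (1 + c k) :=
              Finset.prod_le_prod (fun k _ => zero_le_one) (fun k _ => by linarith [hc k])
        have hS : 0 ≤ ∑ k ∈ Finset.range n, d k := Finset.sum_nonneg fun k _ => hd k
        rw [Finset.sum_range_succ, Finset.prod_range_succ]
        have h1 := hrec n
        have h2 : (1 + c n) * r n ≤ (1 + c n) * ((r 0 + ∑ k ∈ Finset.range n, d k) *
            ∏ k ∈ Finset.range n, (1 + c k)) :=
          mul_le_mul_of_nonneg_left ih (by linarith [hc n])
        have hQ : (1:ℝ) ≤ (∏ k ∈ Finset.range n, (1 + c k)) * (1 + c n) := by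
          nlinarith [hc n]
        have h3 : d n ≤ d n * ((∏ k ∈ Finset.range n, (1 + c k)) * (1 + c n)) :=
          le_mul_of_one_le_right (hd n) hQ
        nlinarith [hr 0, hc n, hd n]
    intro n
    refine (key n).trans ?_
    have h1 : (r 0 + ∑ k ∈ Finset.range n, d k) ≤ r 0 + ∑' k, d k := by
      gcongr
      exact Summable.sum_le_tsum _ (fun k _ => hd k) hds
    have h2 : ∏ k ∈ Finset.range n, (1 + c k) ≤ Real.exp (∑' k, c k) := by
      calc ∏ k ∈ Finset.range n, (1 + c k) ≤ ∏ k ∈ Finset.range n, Real.exp (c k) :=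
            Finset.prod_le_prod (fun k _ => by linarith [hc k])
              (fun k _ => by linarith [Real.add_one_le_exp (c k)])
        _ = Real.exp (∑ k ∈ Finset.range n, c k) := by rw [← Real.exp_sum]
        _ ≤ Real.exp (∑' k, c k) := by
            exact Real.exp_le_exp.2 (Summable.sum_le_tsum _ (fun k _ => hc k) hcs)
    have hPn : (0:ℝ) ≤ ∏ k ∈ Finset.range n, (1 + c k) :=
      Finset.prod_nonneg fun k _ => by linarith [hc k]
    have := mul_le_mul h1 h2 hPn (by linarith [hr 0])
    exact this
  have hR0nn : 0 ≤ R0 := mul_nonneg (by linarith [hr 0]) (Real.exp_nonneg _)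
  -- tails
  set tc : ℕ → ℝ := fun n => ∑' k, c (k + n) with htcdef
  set td : ℕ → ℝ := fun n => ∑' k, d (k + n) with htddef
  have hcs' : ∀ n, Summable fun k => c (k + n) := fun n => (summable_nat_add_iff n).2 hcs
  have hds' : ∀ n, Summable fun k => d (k + n) := fun n => (summable_nat_add_iff n).2 hds
  have htc0 : ∀ n, 0 ≤ tc n := fun n => tsum_nonneg fun k => hc _
  have htd0 : ∀ n, 0 ≤ td n := fun n => tsum_nonneg fun k => hd _
  have htcrec : ∀ n, tc n = c n + tc (n + 1) := by
    intro n
    have := Summable.tsum_eq_zero_add (hcs' n)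
    simp only [zero_add] at this
    rw [htcdef]
    simp only
    rw [this]
    congr 1
    apply tsum_congr
    intro k
    congr 1
    omega
  have htdrec : ∀ n, td n = d n + td (n + 1) := by
    intro n
    have := Summable.tsum_eq_zero_add (hds' n)
    simp only [zero_add] at this
    rw [htddef]
    simp only
    rw [this]
    congr 1
    apply tsum_congr
    intro k
    congr 1
    omega
  set u : ℕ → ℝ := fun n => r n + R0 * tc n + td n with hudef
  have hanti : Antitone u := by
    apply antitone_nat_of_succ_le
    intro n
    have h1 := hrec n
    have h2 : c n * r n ≤ c n * R0 := mul_le_mul_of_nonneg_left (hbd n) (hc n)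
    have h3 := htcrec n
    have h4 := htdrec n
    simp only [hudef]
    nlinarith
  have hbb : BddBelow (Set.range u) := by
    refine ⟨0, ?_⟩
    rintro _ ⟨n, rfl⟩
    have := hr n
    have := htc0 n
    have := htd0 n
    positivity
  have hulim : Tendsto u atTop (nhds (⨅ n, u n)) := tendsto_atTop_ciInf hanti hbb
  have htclim : Tendsto tc atTop (nhds 0) := tendsto_sum_nat_add c
  have htdlim : Tendsto td atTop (nhds 0) := tendsto_sum_nat_add d
  refine ⟨(⨅ n, u n) - R0 * 0 - 0, ?_, ?_⟩
  · have hrtend : Tendsto r atTop (nhds ((⨅ n, u n) - R0 * 0 - 0)) := by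
      have : r = fun n => u n - R0 * tc n - td n := by
        funext n; simp [hudef]; ring
      rw [this]
      exact (hulim.sub ((tendsto_const_nhds (x := R0)).mul htclim)).sub htdlim
    have := ge_of_tendsto' hrtend hr
    linarith
  · have : r = fun n => u n - R0 * tc n - td n := by
      funext n; simp [hudef]; ring
    rw [this]
    exact (hulim.sub ((tendsto_const_nhds (x := R0)).mul htclim)).sub htdlim


set_option maxHeartbeats 1000000 in
private lemma stmt7_schu {X : Type*} [NormedAddCommGroup X] [NormedSpace ℝ X]
    [UniformConvexSpace X] {alo ahi : ℝ} (halo : 0 < alo) (hahi : ahi < 1)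
    {t : ℕ → ℝ} (ht : ∀ n, t n ∈ Set.Icc alo ahi)
    {u v : ℕ → X} {d : ℝ} (hd : 0 ≤ d)
    (hu : ∀ η, 0 < η → ∀ᶠ n in atTop, ‖u n‖ ≤ d + η)
    (hv : ∀ η, 0 < η → ∀ᶠ n in atTop, ‖v n‖ ≤ d + η)
    (hc : Tendsto (fun n => ‖t n • u n + (1 - t n) • v n‖) atTop (nhds d)) :
    Tendsto (fun n => ‖u n - v n‖) atTop (nhds 0) := by
  have key : ∀ ε, 0 < ε → ∀ᶠ n in atTop, ‖u n - v n‖ < ε := by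
    intro ε hε
    rcases eq_or_lt_of_le hd with hd0 | hdpos
    · -- d = 0
      filter_upwards [hu (ε / 3) (by positivity), hv (ε / 3) (by positivity)] with n h1 h2
      have := norm_sub_le (u n) (v n)
      rw [← hd0] at h1 h2
      linarith
    · -- d > 0
      have hε2 : 0 < min (ε / (d + 1)) 1 := by positivity
      obtain ⟨δ0, hδ0, hball⟩ := exists_forall_closed_ball_dist_add_le_two_sub X hε2
      set δ : ℝ := min δ0 1 with hδdef
      have hδpos : 0 < δ := lt_min hδ0 one_pos
      have hδ1 : δ ≤ 1 := min_le_right _ _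
      set a' : ℝ := min alo (1 - ahi) with ha'def
      have ha'pos : 0 < a' := lt_min halo (by linarith)
      have ha'1 : a' < 1 :=
        lt_of_le_of_lt (min_le_left _ _) (by linarith [(ht 0).1, (ht 0).2])
      set η : ℝ := min 1 (a' * δ * d / 2) with hηdef
      have hηpos : 0 < η := lt_min one_pos (by positivity)
      have hη1 : η ≤ 1 := min_le_left _ _
      have hη2 : η ≤ a' * δ * d / 2 := min_le_right _ _
      set c : ℝ := d + η with hcdef
      have hcpos : 0 < c := by positivity
      -- main convexity estimate
      have main : ∀ n, ‖u n‖ ≤ c → ‖v n‖ ≤ c → ε ≤ ‖u n - v n‖ →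
          ‖t n • u n + (1 - t n) • v n‖ ≤ (1 - a' * δ) * c := by
        intro n h1 h2 h3
        have hx : ‖c⁻¹ • u n‖ ≤ 1 := by
          rw [norm_smul, Real.norm_eq_abs, abs_of_pos (inv_pos.2 hcpos)]
          rw [inv_mul_le_iff₀ hcpos, mul_one]
          exact h1
        have hy : ‖c⁻¹ • v n‖ ≤ 1 := by
          rw [norm_smul, Real.norm_eq_abs, abs_of_pos (inv_pos.2 hcpos)]
          rw [inv_mul_le_iff₀ hcpos, mul_one]
          exact h2
        have hxy : min (ε / (d + 1)) 1 ≤ ‖c⁻¹ • u n - c⁻¹ • v n‖ := by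
          rw [← smul_sub, norm_smul, Real.norm_eq_abs, abs_of_pos (inv_pos.2 hcpos)]
          refine le_trans (min_le_left _ _) ?_
          rw [le_inv_mul_iff₀ hcpos]
          have hcd : c ≤ d + 1 := by rw [hcdef]; linarith
          calc c * (ε / (d + 1)) ≤ (d + 1) * (ε / (d + 1)) :=
                mul_le_mul_of_nonneg_right hcd (by positivity)
            _ = ε := by field_simp
            _ ≤ ‖u n - v n‖ := h3
        have hsum := hball hx hy hxy
        have huv : ‖u n + v n‖ ≤ (2 - δ) * c := by
          have : c⁻¹ • u n + c⁻¹ • v n = c⁻¹ • (u n + v n) := by rw [smul_add]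
          rw [this, norm_smul, Real.norm_eq_abs, abs_of_pos (inv_pos.2 hcpos),
            inv_mul_le_iff₀ hcpos] at hsum
          calc ‖u n + v n‖ ≤ (2 - δ0) * c := by linarith [hsum]
            _ ≤ (2 - δ) * c := by
                have : δ ≤ δ0 := min_le_left _ _
                nlinarith
        have htn1 := (ht n).1
        have htn2 := (ht n).2
        have ha'lo : a' ≤ alo := min_le_left _ _
        have ha'hi : a' ≤ 1 - ahi := min_le_right _ _
        rcases le_or_gt (t n) (1 / 2) with hhalf | hhalf
        · have hdecomp : t n • u n + (1 - t n) • v n = t n • (u n + v n) + (1 - 2 * t n) • v n := by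
            module
          rw [hdecomp]
          calc ‖t n • (u n + v n) + (1 - 2 * t n) • v n‖
              ≤ ‖t n • (u n + v n)‖ + ‖(1 - 2 * t n) • v n‖ := norm_add_le _ _
            _ = t n * ‖u n + v n‖ + (1 - 2 * t n) * ‖v n‖ := by
                rw [norm_smul, norm_smul, Real.norm_eq_abs, Real.norm_eq_abs,
                  abs_of_pos (by linarith), abs_of_nonneg (by linarith)]
            _ ≤ t n * ((2 - δ) * c) + (1 - 2 * t n) * c := by
                have h5 : 0 ≤ 1 - 2 * t n := by linarith
                have := mul_le_mul_of_nonneg_left huv (le_of_lt (by linarith : (0:ℝ) < t n))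
                nlinarith [mul_le_mul_of_nonneg_left h2 h5]
            _ ≤ (1 - a' * δ) * c := by
                have h6 : a' ≤ t n := le_trans ha'lo htn1
                have hat : a' * δ * c ≤ t n * (δ * c) := by
                  calc a' * δ * c = a' * (δ * c) := by ring
                    _ ≤ t n * (δ * c) :=
                      mul_le_mul_of_nonneg_right h6 (mul_nonneg hδpos.le hcpos.le)
                nlinarith
        · have hdecomp : t n • u n + (1 - t n) • v n
              = (1 - t n) • (u n + v n) + (2 * t n - 1) • u n := by module
          rw [hdecomp]
          calc ‖(1 - t n) • (u n + v n) + (2 * t n - 1) • u n‖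
              ≤ ‖(1 - t n) • (u n + v n)‖ + ‖(2 * t n - 1) • u n‖ := norm_add_le _ _
            _ = (1 - t n) * ‖u n + v n‖ + (2 * t n - 1) * ‖u n‖ := by
                rw [norm_smul, norm_smul, Real.norm_eq_abs, Real.norm_eq_abs,
                  abs_of_pos (by linarith), abs_of_nonneg (by linarith)]
            _ ≤ (1 - t n) * ((2 - δ) * c) + (2 * t n - 1) * c := by
                have h5 : 0 ≤ 2 * t n - 1 := by linarith
                have := mul_le_mul_of_nonneg_left huv (by linarith : (0:ℝ) ≤ 1 - t n)
                nlinarith [mul_le_mul_of_nonneg_left h1 h5]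
            _ ≤ (1 - a' * δ) * c := by
                have h6 : a' ≤ 1 - t n := by linarith
                have hat : a' * δ * c ≤ (1 - t n) * (δ * c) := by
                  calc a' * δ * c = a' * (δ * c) := by ring
                    _ ≤ (1 - t n) * (δ * c) :=
                      mul_le_mul_of_nonneg_right h6 (mul_nonneg hδpos.le hcpos.le)
                nlinarith
      have hlt : (1 - a' * δ) * c < d := by
        have h1 : a' * δ * η ≥ 0 := by positivity
        have : (1 - a' * δ) * c = d + η - a' * δ * d - a' * δ * η := by rw [hcdef]; ring
        nlinarith
      have hev := hc.eventually (eventually_gt_nhds hlt)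
      filter_upwards [hu η hηpos, hv η hηpos, hev] with n h1 h2 h3
      by_contra hcon
      push_neg at hcon
      exact absurd (main n h1 h2 hcon) (by linarith)
  rw [Metric.tendsto_atTop]
  intro ε hε
  have k2 := key ε hε
  rw [eventually_atTop] at k2
  obtain ⟨N, hN⟩ := k2
  exact ⟨N, fun n hn => by
    rw [Real.dist_eq, sub_zero, abs_of_nonneg (norm_nonneg _)]
    exact hN n hn⟩


private lemma stmt7_combo {X : Type*} [NormedAddCommGroup X] [NormedSpace ℝ X]
    {k : ℕ} (a : Fin k → ℝ) (w : Fin k → X) (p : X) (B : ℝ)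
    (ha0 : ∀ j, 0 ≤ a j) (hs : ∑ j, a j = 1) (hB : ∀ j, ‖w j - p‖ ≤ B) :
    ‖(∑ j, a j • w j) - p‖ ≤ B := by
  have hrw : (∑ j, a j • w j) - p = ∑ j, a j • (w j - p) := by
    simp only [smul_sub, Finset.sum_sub_distrib, ← Finset.sum_smul, hs, one_smul]
  rw [hrw]
  calc ‖∑ j, a j • (w j - p)‖ ≤ ∑ j, ‖a j • (w j - p)‖ := norm_sum_le _ _
    _ ≤ ∑ j, a j * B := by
        refine Finset.sum_le_sum fun j _ => ?_
        rw [norm_smul, Real.norm_eq_abs, abs_of_nonneg (ha0 j)]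
        exact mul_le_mul_of_nonneg_left (hB j) (ha0 j)
    _ = B := by rw [← Finset.sum_mul, hs, one_mul]

private lemma stmt7_combo0 {X : Type*} [NormedAddCommGroup X] [NormedSpace ℝ X]
    {k : ℕ} (a : Fin (k + 1) → ℝ) (w : Fin (k + 1) → X) (p : X) (B : ℝ)
    (ha0 : ∀ j, 0 ≤ a j) (hs : ∑ j, a j = 1) (hB0 : 0 ≤ B)
    (hB : ∀ i : Fin k, ‖w i.succ - p‖ ≤ B) :
    ‖(∑ j, a j • w j) - p‖ ≤ a 0 * ‖w 0 - p‖ + (1 - a 0) * B := by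
  have hrw : (∑ j, a j • w j) - p = ∑ j, a j • (w j - p) := by
    simp only [smul_sub, Finset.sum_sub_distrib, ← Finset.sum_smul, hs, one_smul]
  rw [hrw]
  have hsucc : ∑ i : Fin k, a i.succ = 1 - a 0 := by
    have := hs
    rw [Fin.sum_univ_succ] at this
    linarith
  calc ‖∑ j, a j • (w j - p)‖ ≤ ∑ j, ‖a j • (w j - p)‖ := norm_sum_le _ _
    _ = a 0 * ‖w 0 - p‖ + ∑ i : Fin k, ‖a i.succ • (w i.succ - p)‖ := by
        rw [Fin.sum_univ_succ, norm_smul, Real.norm_eq_abs, abs_of_nonneg (ha0 0)]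
    _ ≤ a 0 * ‖w 0 - p‖ + ∑ i : Fin k, a i.succ * B := by
        gcongr with i _
        rw [norm_smul, Real.norm_eq_abs, abs_of_nonneg (ha0 i.succ)]
        exact mul_le_mul_of_nonneg_left (hB i) (ha0 i.succ)
    _ = a 0 * ‖w 0 - p‖ + (1 - a 0) * B := by rw [← Finset.sum_mul, hsucc]

private lemma stmt7_pin {X : Type*} [NormedAddCommGroup X] [NormedSpace ℝ X]
    {k : ℕ} (a : Fin k → ℝ) (w : Fin k → X) (p : X) (B : ℝ) (j : Fin k)
    (ha0 : ∀ l, 0 ≤ a l) (haj : a j < 1) (hs : ∑ l, a l = 1)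
    (hB : ∀ l, ‖w l - p‖ ≤ B) :
    ∃ v : X, (∑ l, a l • w l) = a j • w j + (1 - a j) • v ∧ ‖v - p‖ ≤ B := by
  classical
  have hjne : (1 : ℝ) - a j ≠ 0 := by linarith
  have hjpos : (0 : ℝ) < 1 - a j := by linarith
  set s := Finset.univ.erase j with hsdef
  have hsum : ∑ l ∈ s, a l = 1 - a j := by
    rw [hsdef, Finset.sum_erase_eq_sub (Finset.mem_univ j), hs]
  refine ⟨(1 - a j)⁻¹ • (∑ l ∈ s, a l • w l), ?_, ?_⟩
  · rw [smul_smul, mul_inv_cancel₀ hjne, one_smul]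
    exact (Finset.add_sum_erase _ _ (Finset.mem_univ j)).symm
  · have h1 : ∑ l ∈ s, a l • (w l - p) = (∑ l ∈ s, a l • w l) - (1 - a j) • p := by
      simp only [smul_sub, Finset.sum_sub_distrib, ← Finset.sum_smul, hsum]
    have hveq : (1 - a j)⁻¹ • (∑ l ∈ s, a l • w l) - p
        = (1 - a j)⁻¹ • (∑ l ∈ s, a l • (w l - p)) := by
      rw [h1, smul_sub, smul_smul, inv_mul_cancel₀ hjne, one_smul]
    rw [hveq, norm_smul, Real.norm_eq_abs, abs_of_pos (inv_pos.2 hjpos),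
      inv_mul_le_iff₀ hjpos]
    calc ‖∑ l ∈ s, a l • (w l - p)‖ ≤ ∑ l ∈ s, ‖a l • (w l - p)‖ := norm_sum_le _ _
      _ ≤ ∑ l ∈ s, a l * B := by
          refine Finset.sum_le_sum fun l _ => ?_
          rw [norm_smul, Real.norm_eq_abs, abs_of_nonneg (ha0 l)]
          exact mul_le_mul_of_nonneg_left (hB l) (ha0 l)
      _ = (1 - a j) * B := by rw [← Finset.sum_mul, hsum]


set_option maxHeartbeats 1600000 in
/-- part of Proposition 3.6: under the bounded-coefficient scheme
hypotheses with all maps continuous, `lim ‖x n - (T i)ⁿ (x n)‖ = 0` for each `i`. -/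
theorem stmt7
    {X : Type*} [NormedAddCommGroup X] [NormedSpace ℝ X] [CompleteSpace X]
    [UniformConvexSpace X]
    {K : Set X} (hKne : K.Nonempty) (hKcl : IsClosed K) (hKco : Convex ℝ K)
    {m : ℕ} (hm : 1 ≤ m)
    (T I : Fin m → X → X)
    (hTK : ∀ i, Set.MapsTo (T i) K K) (hIK : ∀ i, Set.MapsTo (I i) K K)
    (hTcont : ∀ i, ContinuousOn (T i) K) (hIcont : ∀ i, ContinuousOn (I i) K)
    (μ lam tμ tlam : Fin m → ℕ → ℝ)
    (hμ0 : ∀ i n, 0 ≤ μ i n) (hlam0 : ∀ i n, 0 ≤ lam i n)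
    (htμ0 : ∀ i n, 0 ≤ tμ i n) (htlam0 : ∀ i n, 0 ≤ tlam i n)
    (hμlim : ∀ i, Tendsto (μ i) atTop (nhds 0)) (hlamlim : ∀ i, Tendsto (lam i) atTop (nhds 0))
    (htμlim : ∀ i, Tendsto (tμ i) atTop (nhds 0))
    (htlamlim : ∀ i, Tendsto (tlam i) atTop (nhds 0))
    (hμsum : ∀ i, Summable (μ i)) (hlamsum : ∀ i, Summable (lam i))
    (htμsum : ∀ i, Summable (tμ i)) (htlamsum : ∀ i, Summable (tlam i))
    (φ ψ : Fin m → ℝ → ℝ)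
    (hφmono : ∀ i, StrictMonoOn (φ i) (Set.Ici 0))
    (hφcont : ∀ i, ContinuousOn (φ i) (Set.Ici 0))
    (hφ0 : ∀ i, φ i 0 = 0) (hφpos : ∀ i t, 0 ≤ t → 0 ≤ φ i t)
    (hψmono : ∀ i, StrictMonoOn (ψ i) (Set.Ici 0))
    (hψcont : ∀ i, ContinuousOn (ψ i) (Set.Ici 0))
    (hψ0 : ∀ i, ψ i 0 = 0) (hψpos : ∀ i t, 0 ≤ t → 0 ≤ ψ i t)
    (hI : ∀ i, ∀ n, 1 ≤ n → ∀ x ∈ K, ∀ y ∈ K,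
      ‖(I i)^[n] x - (I i)^[n] y‖ ≤ ‖x - y‖ + tμ i n * ψ i ‖x - y‖ + tlam i n)
    (hT : ∀ i, ∀ n, 1 ≤ n → ∀ x ∈ K, ∀ y ∈ K,
      ‖(T i)^[n] x - (T i)^[n] y‖ ≤
        ‖(I i)^[n] x - (I i)^[n] y‖ + μ i n * φ i ‖(I i)^[n] x - (I i)^[n] y‖ + lam i n)
    (F : Set X)
    (hFdef : ∀ p, p ∈ F ↔ p ∈ K ∧ ∀ i, T i p = p ∧ I i p = p)
    (hFne : F.Nonempty)
    (M Ms N Ns : Fin m → ℝ)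
    (hM : ∀ i, 0 < M i) (hMs : ∀ i, 0 < Ms i) (hN : ∀ i, 0 < N i) (hNs : ∀ i, 0 < Ns i)
    (hφbound : ∀ i ξ, M i ≤ ξ → φ i ξ ≤ Ms i * ξ)
    (hψbound : ∀ i ζ, N i ≤ ζ → ψ i ζ ≤ Ns i * ζ)
    (alo ahi blo bhi : ℝ)
    (halo : 0 < alo) (hahi : alo < ahi) (hahi1 : ahi < 1)
    (hblo : 0 < blo) (hbhi : blo < bhi) (hbhi1 : bhi < 1)
    (a b : Fin (m + 1) → ℕ → ℝ)
    (ha : ∀ j n, a j n ∈ Set.Icc alo ahi) (hb : ∀ j n, b j n ∈ Set.Icc blo bhi)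
    (hasum : ∀ n, ∑ j, a j n = 1) (hbsum : ∀ n, ∑ j, b j n = 1)
    (x y : ℕ → X) (hx0 : x 0 ∈ K)
    (hy : ∀ n, y n = b 0 n • x n + ∑ i : Fin m, b i.succ n • (I i)^[n] (x n))
    (hxrec : ∀ n, x (n + 1) = a 0 n • x n + ∑ i : Fin m, a i.succ n • (T i)^[n] (y n))
    : ∀ i, Tendsto (fun n => ‖x n - (T i)^[n] (x n)‖) atTop (nhds 0) := by
  -- fixed point
  obtain ⟨p, hpF⟩ := hFne
  obtain ⟨hpK, hTIp⟩ := (hFdef p).1 hpF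
  have hTp : ∀ (i : Fin m) (n : ℕ), (T i)^[n] p = p := fun i n =>
    Function.iterate_fixed (hTIp i).1 n
  have hIp : ∀ (i : Fin m) (n : ℕ), (I i)^[n] p = p := fun i n =>
    Function.iterate_fixed (hTIp i).2 n
  -- inequalities valid for all n (including 0)
  have hI' : ∀ (i : Fin m) (n : ℕ), ∀ w ∈ K, ∀ w' ∈ K,
      ‖(I i)^[n] w - (I i)^[n] w'‖ ≤ ‖w - w'‖ + tμ i n * ψ i ‖w - w'‖ + tlam i n := by
    intro i n w hw w' hw'
    match n with
    | 0 =>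
      simp only [Function.iterate_zero, id_eq]
      have h1 : 0 ≤ tμ i 0 * ψ i ‖w - w'‖ :=
        mul_nonneg (htμ0 i 0) (hψpos i _ (norm_nonneg _))
      linarith [htlam0 i 0]
    | (n + 1) => exact hI i (n + 1) (by omega) w hw w' hw'
  have hT' : ∀ (i : Fin m) (n : ℕ), ∀ w ∈ K, ∀ w' ∈ K,
      ‖(T i)^[n] w - (T i)^[n] w'‖ ≤ ‖(I i)^[n] w - (I i)^[n] w'‖ +
        μ i n * φ i ‖(I i)^[n] w - (I i)^[n] w'‖ + lam i n := by
    intro i n w hw w' hw'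
    match n with
    | 0 =>
      simp only [Function.iterate_zero, id_eq]
      have h1 : 0 ≤ μ i 0 * φ i ‖w - w'‖ :=
        mul_nonneg (hμ0 i 0) (hφpos i _ (norm_nonneg _))
      linarith [hlam0 i 0]
    | (n + 1) => exact hT i (n + 1) (by omega) w hw w' hw'
  -- coefficient facts
  have ha0 : ∀ j n, 0 ≤ a j n := fun j n => le_trans halo.le (ha j n).1
  have ha1 : ∀ j n, a j n < 1 := fun j n => lt_of_le_of_lt (ha j n).2 hahi1
  have hb0 : ∀ j n, 0 ≤ b j n := fun j n => le_trans hblo.le (hb j n).1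
  have hb1 : ∀ j n, b j n < 1 := fun j n => lt_of_le_of_lt (hb j n).2 hbhi1
  -- convex-combination form of the scheme
  set z : ℕ → Fin (m + 1) → X := fun n => Fin.cons (x n) (fun i => (T i)^[n] (y n)) with hzdef
  set z' : ℕ → Fin (m + 1) → X := fun n => Fin.cons (x n) (fun i => (I i)^[n] (x n)) with hz'def
  have hz0 : ∀ n, z n 0 = x n := fun n => rfl
  have hzs : ∀ n (i : Fin m), z n i.succ = (T i)^[n] (y n) := fun n i => by
    simp [hzdef, Fin.cons_succ]
  have hz'0 : ∀ n, z' n 0 = x n := fun n => rfl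
  have hz's : ∀ n (i : Fin m), z' n i.succ = (I i)^[n] (x n) := fun n i => by
    simp [hz'def, Fin.cons_succ]
  have hxz : ∀ n, x (n + 1) = ∑ j, a j n • z n j := by
    intro n
    rw [hxrec n, Fin.sum_univ_succ, hz0]
    refine congrArg (fun s => a 0 n • x n + s) ?_
    exact Finset.sum_congr rfl fun i _ => by rw [hzs]
  have hyz : ∀ n, y n = ∑ j, b j n • z' n j := by
    intro n
    rw [hy n, Fin.sum_univ_succ, hz'0]
    refine congrArg (fun s => b 0 n • x n + s) ?_
    exact Finset.sum_congr rfl fun i _ => by rw [hz's]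
  -- membership
  have hxK : ∀ n, x n ∈ K := by
    intro n
    induction n with
    | zero => exact hx0
    | succ n ih =>
      have hyK : y n ∈ K := by
        rw [hyz n]
        refine hKco.sum_mem (fun j _ => hb0 j n) (hbsum n) (fun j _ => ?_)
        refine Fin.cases ?_ ?_ j
        · exact ih
        · intro i
          rw [hz's]
          exact (hIK i).iterate n ih
      rw [hxz n]
      refine hKco.sum_mem (fun j _ => ha0 j n) (hasum n) (fun j _ => ?_)
      refine Fin.cases ?_ ?_ j
      · exact ih
      · intro i
        rw [hzs]
        exact (hTK i).iterate n hyK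
  have hyK : ∀ n, y n ∈ K := by
    intro n
    rw [hyz n]
    refine hKco.sum_mem (fun j _ => hb0 j n) (hbsum n) (fun j _ => ?_)
    refine Fin.cases ?_ ?_ j
    · exact hxK n
    · intro i
      rw [hz's]
      exact (hIK i).iterate n (hxK n)
  -- gauge linear bounds
  set Φ : Fin m → ℝ := fun i => φ i (M i) with hΦdef
  set Ψ : Fin m → ℝ := fun i => ψ i (N i) with hΨdef
  have hΦ0 : ∀ i, 0 ≤ Φ i := fun i => hφpos i _ (hM i).le
  have hΨ0 : ∀ i, 0 ≤ Ψ i := fun i => hψpos i _ (hN i).le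
  have hφ' : ∀ i ξ, 0 ≤ ξ → φ i ξ ≤ Φ i + Ms i * ξ := by
    intro i ξ hξ
    rcases le_or_gt ξ (M i) with h | h
    · have h1 : φ i ξ ≤ Φ i := (hφmono i).monotoneOn hξ (hM i).le h
      nlinarith [mul_nonneg (hMs i).le hξ]
    · have h1 := hφbound i ξ h.le
      nlinarith [hΦ0 i]
  have hψ' : ∀ i ζ, 0 ≤ ζ → ψ i ζ ≤ Ψ i + Ns i * ζ := by
    intro i ζ hζ
    rcases le_or_gt ζ (N i) with h | h
    · have h1 : ψ i ζ ≤ Ψ i := (hψmono i).monotoneOn hζ (hN i).le h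
      nlinarith [mul_nonneg (hNs i).le hζ]
    · have h1 := hψbound i ζ h.le
      nlinarith [hΨ0 i]
  -- aggregated null sequences
  set K1 : ℕ → ℝ := fun n => ∑ i : Fin m, tμ i n * Ns i with hK1def
  set K2 : ℕ → ℝ := fun n => ∑ i : Fin m, (tμ i n * Ψ i + tlam i n) with hK2def
  set K3 : ℕ → ℝ := fun n => ∑ i : Fin m, μ i n * Ms i with hK3def
  set K4 : ℕ → ℝ := fun n => ∑ i : Fin m, (μ i n * Φ i + lam i n) with hK4def
  have hK1n : ∀ n, 0 ≤ K1 n := fun n =>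
    Finset.sum_nonneg fun i _ => mul_nonneg (htμ0 i n) (hNs i).le
  have hK2n : ∀ n, 0 ≤ K2 n := fun n =>
    Finset.sum_nonneg fun i _ => add_nonneg (mul_nonneg (htμ0 i n) (hΨ0 i)) (htlam0 i n)
  have hK3n : ∀ n, 0 ≤ K3 n := fun n =>
    Finset.sum_nonneg fun i _ => mul_nonneg (hμ0 i n) (hMs i).le
  have hK4n : ∀ n, 0 ≤ K4 n := fun n =>
    Finset.sum_nonneg fun i _ => add_nonneg (mul_nonneg (hμ0 i n) (hΦ0 i)) (hlam0 i n)
  have hK1i : ∀ i n, tμ i n * Ns i ≤ K1 n := fun i n =>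
    Finset.single_le_sum (fun i _ => mul_nonneg (htμ0 i n) (hNs i).le) (Finset.mem_univ i)
  have hK2i : ∀ i n, tμ i n * Ψ i + tlam i n ≤ K2 n := fun i n =>
    Finset.single_le_sum
      (fun i _ => add_nonneg (mul_nonneg (htμ0 i n) (hΨ0 i)) (htlam0 i n)) (Finset.mem_univ i)
  have hK3i : ∀ i n, μ i n * Ms i ≤ K3 n := fun i n =>
    Finset.single_le_sum (fun i _ => mul_nonneg (hμ0 i n) (hMs i).le) (Finset.mem_univ i)
  have hK4i : ∀ i n, μ i n * Φ i + lam i n ≤ K4 n := fun i n =>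
    Finset.single_le_sum
      (fun i _ => add_nonneg (mul_nonneg (hμ0 i n) (hΦ0 i)) (hlam0 i n)) (Finset.mem_univ i)
  have hK1sum : Summable K1 := summable_sum fun i _ => (htμsum i).mul_right (Ns i)
  have hK2sum : Summable K2 :=
    summable_sum fun i _ => ((htμsum i).mul_right (Ψ i)).add (htlamsum i)
  have hK3sum : Summable K3 := summable_sum fun i _ => (hμsum i).mul_right (Ms i)
  have hK4sum : Summable K4 :=
    summable_sum fun i _ => ((hμsum i).mul_right (Φ i)).add (hlamsum i)
  have hK1lim : Tendsto K1 atTop (nhds 0) := by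
    have := tendsto_finset_sum (Finset.univ : Finset (Fin m))
      (fun i _ => (htμlim i).mul_const (Ns i))
    simpa using this
  have hK2lim : Tendsto K2 atTop (nhds 0) := by
    have := tendsto_finset_sum (Finset.univ : Finset (Fin m))
      (fun i _ => ((htμlim i).mul_const (Ψ i)).add (htlamlim i))
    simpa using this
  have hK3lim : Tendsto K3 atTop (nhds 0) := by
    have := tendsto_finset_sum (Finset.univ : Finset (Fin m))
      (fun i _ => (hμlim i).mul_const (Ms i))
    simpa using this
  have hK4lim : Tendsto K4 atTop (nhds 0) := by
    have := tendsto_finset_sum (Finset.univ : Finset (Fin m))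
      (fun i _ => ((hμlim i).mul_const (Φ i)).add (hlamlim i))
    simpa using this
  have hB1 : ∀ n, K1 n ≤ ∑' k, K1 k := fun n => Summable.le_tsum hK1sum n fun k _ => hK1n k
  have hB3 : ∀ n, K3 n ≤ ∑' k, K3 k := fun n => Summable.le_tsum hK3sum n fun k _ => hK3n k
  set B1 : ℝ := ∑' k, K1 k with hB1def
  set B3 : ℝ := ∑' k, K3 k with hB3def
  have hB1n : 0 ≤ B1 := tsum_nonneg hK1n
  have hB3n : 0 ≤ B3 := tsum_nonneg hK3n
  -- the key one-step estimates
  have EI : ∀ (i : Fin m) (n : ℕ), ∀ w ∈ K,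
      ‖(I i)^[n] w - p‖ ≤ (1 + K1 n) * ‖w - p‖ + K2 n := by
    intro i n w hw
    have h1 : ‖(I i)^[n] w - p‖ ≤ ‖w - p‖ + tμ i n * ψ i ‖w - p‖ + tlam i n := by
      have := hI' i n w hw p hpK
      rwa [hIp i n] at this
    have h2 : ψ i ‖w - p‖ ≤ Ψ i + Ns i * ‖w - p‖ := hψ' i _ (norm_nonneg _)
    have h3 : tμ i n * ψ i ‖w - p‖ ≤ tμ i n * Ψ i + tμ i n * (Ns i * ‖w - p‖) := by
      have := mul_le_mul_of_nonneg_left h2 (htμ0 i n)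
      rwa [mul_add] at this
    have h4 := hK1i i n
    have h5 := hK2i i n
    have h6 : tμ i n * Ns i * ‖w - p‖ ≤ K1 n * ‖w - p‖ :=
      mul_le_mul_of_nonneg_right h4 (norm_nonneg (w - p))
    nlinarith [h1, h3, h5, h6]
  have ET : ∀ (i : Fin m) (n : ℕ), ∀ w ∈ K,
      ‖(T i)^[n] w - p‖ ≤ (1 + K3 n) * ((1 + K1 n) * ‖w - p‖ + K2 n) + K4 n := by
    intro i n w hw
    set Dq : ℝ := ‖(I i)^[n] w - p‖ with hDq
    have hDq0 : 0 ≤ Dq := norm_nonneg _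
    have h1 : ‖(T i)^[n] w - p‖ ≤ Dq + μ i n * φ i Dq + lam i n := by
      have := hT' i n w hw p hpK
      rwa [hIp i n, hTp i n] at this
    have h2 : φ i Dq ≤ Φ i + Ms i * Dq := hφ' i _ hDq0
    have h3 : μ i n * φ i Dq ≤ μ i n * Φ i + μ i n * (Ms i * Dq) := by
      have := mul_le_mul_of_nonneg_left h2 (hμ0 i n)
      rwa [mul_add] at this
    have h4 : Dq ≤ (1 + K1 n) * ‖w - p‖ + K2 n := EI i n w hw
    have h5 := hK3i i n
    have h6 := hK4i i n
    have h7 : μ i n * (Ms i * Dq) ≤ K3 n * ((1 + K1 n) * ‖w - p‖ + K2 n) := by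
      have h7a : μ i n * (Ms i * Dq) = μ i n * Ms i * Dq := by ring
      rw [h7a]
      exact mul_le_mul h5 h4 hDq0 (hK3n n)
    nlinarith [h1, h3, h7, h4, h6]
  -- norms to the fixed point
  set r : ℕ → ℝ := fun n => ‖x n - p‖ with hrdef
  set q : ℕ → ℝ := fun n => ‖y n - p‖ with hqdef
  have hr0 : ∀ n, 0 ≤ r n := fun n => norm_nonneg _
  have hq0 : ∀ n, 0 ≤ q n := fun n => norm_nonneg _
  -- a priori bound on q
  have hqup : ∀ n, q n ≤ (1 + K1 n) * r n + K2 n := by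
    intro n
    simp only [hqdef, hrdef]
    rw [hyz n]
    refine stmt7_combo _ _ _ _ (fun j => hb0 j n) (hbsum n) ?_
    intro j
    refine Fin.cases ?_ ?_ j
    · rw [hz'0]
      nlinarith [norm_nonneg (x n - p), hK1n n, hK2n n,
        mul_nonneg (hK1n n) (norm_nonneg (x n - p))]
    · intro i
      rw [hz's]
      exact EI i n (x n) (hxK n)
  -- global bound for the z-family
  set Gh : ℕ → ℝ := fun n =>
    (1 + K3 n) * ((1 + K1 n) * ((1 + K1 n) * r n + K2 n) + K2 n) + K4 n with hGhdef
  have he1 : ∀ n, (0:ℝ) ≤ 1 + K1 n := fun n => by linarith [hK1n n]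
  have he3 : ∀ n, (0:ℝ) ≤ 1 + K3 n := fun n => by linarith [hK3n n]
  have he2 : ∀ n, 0 ≤ (1 + K1 n) * r n + K2 n := fun n =>
    add_nonneg (mul_nonneg (he1 n) (hr0 n)) (hK2n n)
  have he2' : ∀ n, 0 ≤ (1 + K1 n) * ((1 + K1 n) * r n + K2 n) + K2 n := fun n =>
    add_nonneg (mul_nonneg (he1 n) (he2 n)) (hK2n n)
  have hGh0 : ∀ n, 0 ≤ Gh n := fun n =>
    add_nonneg (mul_nonneg (he3 n) (he2' n)) (hK4n n)
  have hrGh : ∀ n, r n ≤ Gh n := by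
    intro n
    have s1 : r n ≤ (1 + K1 n) * r n + K2 n := by
      nlinarith [mul_nonneg (hK1n n) (hr0 n), hK2n n]
    have s2 : (1 + K1 n) * r n + K2 n ≤ (1 + K1 n) * ((1 + K1 n) * r n + K2 n) + K2 n := by
      nlinarith [mul_nonneg (hK1n n) (he2 n), hK2n n]
    have s3 : (1 + K1 n) * ((1 + K1 n) * r n + K2 n) + K2 n ≤ Gh n := by
      simp only [hGhdef]
      nlinarith [mul_nonneg (hK3n n) (he2' n), hK4n n]
    linarith
  have hzG : ∀ n (j : Fin (m + 1)), ‖z n j - p‖ ≤ Gh n := by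
    intro n j
    refine Fin.cases ?_ ?_ j
    · rw [hz0]
      exact le_trans (le_of_eq (by simp [hrdef])) (hrGh n)
    · intro i
      rw [hzs]
      have h1 := ET i n (y n) (hyK n)
      have h2 := hqup n
      simp only [hqdef, hrdef] at h2
      have hmono : (1 + K3 n) * ((1 + K1 n) * ‖y n - p‖)
          ≤ (1 + K3 n) * ((1 + K1 n) * ((1 + K1 n) * ‖x n - p‖ + K2 n)) := by
        refine mul_le_mul_of_nonneg_left ?_ (he3 n)
        exact mul_le_mul_of_nonneg_left h2 (he1 n)
      simp only [hGhdef, hrdef]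
      nlinarith [h1, hmono]
  -- recursion for r
  set Cc : ℕ → ℝ := fun n => (1 + K3 n) * (1 + K1 n) * (1 + K1 n) - 1 with hCcdef
  set Dd : ℕ → ℝ := fun n => (1 + K3 n) * ((1 + K1 n) * K2 n + K2 n) + K4 n with hDddef
  have hrec : ∀ n, r (n + 1) ≤ (1 + Cc n) * r n + Dd n := by
    intro n
    have h1 : r (n + 1) ≤ Gh n := by
      simp only [hrdef]
      rw [hxz n]
      exact stmt7_combo _ _ _ _ (fun j => ha0 j n) (hasum n) (hzG n)
    have h2 : Gh n = (1 + Cc n) * r n + Dd n := by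
      simp only [hGhdef, hCcdef, hDddef]
      ring
    linarith
  have hCc0 : ∀ n, 0 ≤ Cc n := by
    intro n
    simp only [hCcdef]
    nlinarith [hK1n n, hK3n n, mul_nonneg (hK1n n) (hK1n n), mul_nonneg (hK3n n) (hK1n n),
      mul_nonneg (mul_nonneg (hK3n n) (hK1n n)) (hK1n n)]
  have hDd0 : ∀ n, 0 ≤ Dd n := by
    intro n
    simp only [hDddef]
    nlinarith [hK2n n, hK4n n, mul_nonneg (hK1n n) (hK2n n), mul_nonneg (hK3n n) (hK2n n),
      mul_nonneg (mul_nonneg (hK3n n) (hK1n n)) (hK2n n)]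
  have hCcsum : Summable Cc := by
    refine Summable.of_nonneg_of_le hCc0 (fun n => ?_)
      (((hK3sum.mul_left ((1 + B1) * (1 + B1))).add (hK1sum.mul_left (2 + B1))))
    have e1 : 1 + K1 n ≤ 1 + B1 := by linarith [hB1 n]
    have e2 : (1 + K1 n) * (1 + K1 n) ≤ (1 + B1) * (1 + B1) :=
      mul_le_mul e1 e1 (he1 n) (by linarith [hB1n])
    have e3 : K3 n * ((1 + K1 n) * (1 + K1 n)) ≤ K3 n * ((1 + B1) * (1 + B1)) :=
      mul_le_mul_of_nonneg_left e2 (hK3n n)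
    have e4 : K1 n * (2 + K1 n) ≤ K1 n * (2 + B1) :=
      mul_le_mul_of_nonneg_left (by linarith [hB1 n]) (hK1n n)
    simp only [hCcdef]
    nlinarith [e3, e4]
  have hDdsum : Summable Dd := by
    refine Summable.of_nonneg_of_le hDd0 (fun n => ?_)
      (((hK2sum.mul_left ((1 + B3) * (2 + B1))).add hK4sum))
    have e5 : (1 + K3 n) * (2 + K1 n) ≤ (1 + B3) * (2 + B1) :=
      mul_le_mul (by linarith [hB3 n]) (by linarith [hB1 n])
        (by linarith [hK1n n]) (by linarith [hB3n])
    have e6 : (1 + K3 n) * (2 + K1 n) * K2 n ≤ (1 + B3) * (2 + B1) * K2 n :=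
      mul_le_mul_of_nonneg_right e5 (hK2n n)
    simp only [hDddef]
    nlinarith [e6]
  obtain ⟨d, hd0, hrlim⟩ := stmt7_aux_conv r Cc Dd hr0 hCc0 hDd0 hCcsum hDdsum hrec
  -- limits of auxiliary sequences
  have h1K1 : Tendsto (fun n => 1 + K1 n) atTop (nhds 1) := by
    simpa using (tendsto_const_nhds (x := (1:ℝ))).add hK1lim
  have h1K3 : Tendsto (fun n => 1 + K3 n) atTop (nhds 1) := by
    simpa using (tendsto_const_nhds (x := (1:ℝ))).add hK3lim
  have hs'lim : Tendsto (fun n => (1 + K1 n) * r n + K2 n) atTop (nhds d) := by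
    have := (h1K1.mul hrlim).add hK2lim
    simpa using this
  have hGhlim : Tendsto Gh atTop (nhds d) := by
    have := (h1K3.mul ((h1K1.mul hs'lim).add hK2lim)).add hK4lim
    simp only [hGhdef]
    simpa using this
  have hGle : ∀ η : ℝ, 0 < η → ∀ᶠ n in atTop, Gh n ≤ d + η := by
    intro η hη
    have hev : ∀ᶠ ξ in nhds d, ξ < d + η := eventually_lt_nhds (by linarith)
    filter_upwards [hGhlim.eventually hev] with n h using h.le
  have hs'le : ∀ η : ℝ, 0 < η → ∀ᶠ n in atTop, (1 + K1 n) * r n + K2 n ≤ d + η := by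
    intro η hη
    have hev : ∀ᶠ ξ in nhds d, ξ < d + η := eventually_lt_nhds (by linarith)
    filter_upwards [hs'lim.eventually hev] with n h using h.le
  -- pin decompositions of the x-scheme
  have hpin : ∀ n (j : Fin (m + 1)), ∃ v : X,
      x (n + 1) = a j n • z n j + (1 - a j n) • v ∧ ‖v - p‖ ≤ Gh n := by
    intro n j
    obtain ⟨v, hv1, hv2⟩ := stmt7_pin (fun l => a l n) (z n) p (Gh n) j
      (fun l => ha0 l n) (ha1 j n) (hasum n) (hzG n)
    exact ⟨v, by rw [hxz n]; exact hv1, hv2⟩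
  choose vv hvv1 hvv2 using hpin
  have hrlim' : Tendsto (fun n => r (n + 1)) atTop (nhds d) :=
    hrlim.comp (tendsto_add_atTop_nat 1)
  have hXZ : ∀ j : Fin (m + 1), Tendsto (fun n => ‖x (n + 1) - z n j‖) atTop (nhds 0) := by
    intro j
    have hcomb : Tendsto
        (fun n => ‖a j n • (z n j - p) + (1 - a j n) • (vv n j - p)‖) atTop (nhds d) := by
      have heq : (fun n => ‖a j n • (z n j - p) + (1 - a j n) • (vv n j - p)‖)
          = fun n => ‖x (n + 1) - p‖ := by
        funext n
        congr 1
        rw [hvv1 n j]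
        module
      rw [heq]
      have := hrlim'
      simp only [hrdef] at this
      exact this
    have hschu := stmt7_schu halo hahi1 (t := fun n => a j n) (fun n => ha j n)
      (u := fun n => z n j - p) (v := fun n => vv n j - p) hd0
      (fun η hη => by
        filter_upwards [hGle η hη] with n h
        exact le_trans (hzG n j) h)
      (fun η hη => by
        filter_upwards [hGle η hη] with n h
        exact le_trans (hvv2 n j) h)
      hcomb
    have hschu' : Tendsto (fun n => ‖z n j - vv n j‖) atTop (nhds 0) := by
      have heq : (fun n => ‖(z n j - p) - (vv n j - p)‖) = fun n => ‖z n j - vv n j‖ := by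
        funext n
        rw [sub_sub_sub_cancel_right]
      rwa [heq] at hschu
    refine squeeze_zero (fun n => norm_nonneg _) (fun n => ?_) hschu'
    have h1 : x (n + 1) - z n j = (1 - a j n) • (vv n j - z n j) := by
      rw [hvv1 n j]
      module
    rw [h1, norm_smul, Real.norm_eq_abs, abs_of_nonneg (by linarith [ha1 j n]),
      norm_sub_rev]
    nlinarith [norm_nonneg (z n j - vv n j), ha0 j n, ha1 j n]
  have hXX : Tendsto (fun n => ‖x (n + 1) - x n‖) atTop (nhds 0) := by
    have := hXZ 0
    simpa [hz0] using this
  have hxTy : Tendsto (fun n => ‖x (n + 1) - x n‖) atTop (nhds 0) → True := fun _ => trivial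
  have hxT : ∀ i : Fin m, Tendsto (fun n => ‖x n - (T i)^[n] (y n)‖) atTop (nhds 0) := by
    intro i
    have h1 : Tendsto (fun n => ‖x (n + 1) - (T i)^[n] (y n)‖) atTop (nhds 0) := by
      have := hXZ i.succ
      simp only [hzs] at this
      exact this
    have h2 : Tendsto
        (fun n => ‖x (n + 1) - x n‖ + ‖x (n + 1) - (T i)^[n] (y n)‖) atTop (nhds 0) := by
      simpa using hXX.add h1
    refine squeeze_zero (fun n => norm_nonneg _) (fun n => ?_) h2
    have h3 : x n - (T i)^[n] (y n)
        = (x (n + 1) - (T i)^[n] (y n)) - (x (n + 1) - x n) := by abel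
    rw [h3]
    have h4 := norm_sub_le (x (n + 1) - (T i)^[n] (y n)) (x (n + 1) - x n)
    linarith
  -- convergence of ‖y n - p‖ to d
  have hsplit : ∀ n, ‖x (n + 1) - p‖ ≤ a 0 n * ‖x n - p‖ + (1 - a 0 n) *
      ((1 + K3 n) * ((1 + K1 n) * ‖y n - p‖ + K2 n) + K4 n) := by
    intro n
    have hBnn : 0 ≤ (1 + K3 n) * ((1 + K1 n) * ‖y n - p‖ + K2 n) + K4 n :=
      add_nonneg (mul_nonneg (he3 n)
        (add_nonneg (mul_nonneg (he1 n) (norm_nonneg _)) (hK2n n))) (hK4n n)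
    have hcal := stmt7_combo0 (fun j => a j n) (z n) p
      ((1 + K3 n) * ((1 + K1 n) * ‖y n - p‖ + K2 n) + K4 n)
      (fun j => ha0 j n) (hasum n) hBnn
      (fun i => by
        rw [hzs]
        exact ET i n (y n) (hyK n))
    rw [← hxz n] at hcal
    simpa [hz0] using hcal
  set llow : ℕ → ℝ := fun n => r n - |r (n + 1) - r n| / (1 - ahi) with hllowdef
  have hahi' : (0:ℝ) < 1 - ahi := by linarith
  have hGl : ∀ n, llow n ≤ (1 + K3 n) * ((1 + K1 n) * ‖y n - p‖ + K2 n) + K4 n := by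
    intro n
    set G : ℝ := (1 + K3 n) * ((1 + K1 n) * ‖y n - p‖ + K2 n) + K4 n with hGdef
    have h1 : r (n + 1) ≤ a 0 n * r n + (1 - a 0 n) * G := by
      have := hsplit n
      simp only [hrdef]
      simpa [hGdef] using this
    have h3 : (r (n + 1) - r n) ≤ (1 - a 0 n) * (G - r n) := by nlinarith [h1]
    have key : (1 - ahi) * (r n - G) ≤ |r (n + 1) - r n| := by
      rcases le_or_gt (r n) G with h | h
      · nlinarith [abs_nonneg (r (n + 1) - r n)]
      · have h5 : 0 ≤ (ahi - a 0 n) * (r n - G) :=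
          mul_nonneg (by linarith [(ha 0 n).2]) (by linarith)
        nlinarith [h3, neg_abs_le (r (n + 1) - r n)]
    have h6 : r n - G ≤ |r (n + 1) - r n| / (1 - ahi) :=
      (le_div_iff₀ hahi').2 (by linarith [key])
    simp only [hllowdef]
    linarith
  have hllowlim : Tendsto llow atTop (nhds d) := by
    have hΔ : Tendsto (fun n => |r (n + 1) - r n|) atTop (nhds 0) := by
      have := (hrlim'.sub hrlim).abs
      simpa using this
    have := hrlim.sub (hΔ.div_const (1 - ahi))
    simp only [hllowdef]
    simpa using this
  have hQle : ∀ n, ((llow n - K4 n) / (1 + K3 n) - K2 n) / (1 + K1 n) ≤ ‖y n - p‖ := by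
    intro n
    have hpos3 : (0:ℝ) < 1 + K3 n := by linarith [hK3n n]
    have hpos1 : (0:ℝ) < 1 + K1 n := by linarith [hK1n n]
    have h1 := hGl n
    have h2 : (llow n - K4 n) / (1 + K3 n) ≤ (1 + K1 n) * ‖y n - p‖ + K2 n := by
      rw [div_le_iff₀ hpos3]
      nlinarith [h1]
    rw [div_le_iff₀ hpos1]
    nlinarith [h2]
  have hQlim : Tendsto
      (fun n => ((llow n - K4 n) / (1 + K3 n) - K2 n) / (1 + K1 n)) atTop (nhds d) := by
    have hnum : Tendsto (fun n => llow n - K4 n) atTop (nhds d) := by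
      simpa using hllowlim.sub hK4lim
    have hdiv : Tendsto (fun n => (llow n - K4 n) / (1 + K3 n)) atTop (nhds d) := by
      have := hnum.div h1K3 one_ne_zero
      rw [div_one] at this
      exact this
    have := (hdiv.sub hK2lim).div h1K1 one_ne_zero
    rw [sub_zero, div_one] at this
    exact this
  have hqd : Tendsto (fun n => ‖y n - p‖) atTop (nhds d) := by
    have hup : ∀ n, ‖y n - p‖ ≤ (1 + K1 n) * r n + K2 n := by
      intro n
      have := hqup n
      simpa [hqdef, hrdef] using this
    exact tendsto_of_tendsto_of_tendsto_of_le_of_le hQlim hs'lim hQle hup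
  -- pin on the y-scheme at index 0
  have hz'le : ∀ n (l : Fin (m + 1)), ‖z' n l - p‖ ≤ (1 + K1 n) * r n + K2 n := by
    intro n l
    refine Fin.cases ?_ ?_ l
    · rw [hz'0]
      have hrr : r n = ‖x n - p‖ := by simp [hrdef]
      rw [hrr]
      nlinarith [norm_nonneg (x n - p), mul_nonneg (hK1n n) (norm_nonneg (x n - p)), hK2n n]
    · intro i
      rw [hz's]
      have := EI i n (x n) (hxK n)
      simpa [hrdef] using this
  have hpiny : ∀ n, ∃ v, y n = b 0 n • x n + (1 - b 0 n) • v ∧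
      ‖v - p‖ ≤ (1 + K1 n) * r n + K2 n := by
    intro n
    obtain ⟨v, hv1, hv2⟩ := stmt7_pin (fun l => b l n) (z' n) p _ 0
      (fun l => hb0 l n) (hb1 0 n) (hbsum n) (hz'le n)
    refine ⟨v, ?_, hv2⟩
    rw [hyz n, hv1, hz'0]
  choose vy hvy1 hvy2 using hpiny
  have hyx : Tendsto (fun n => ‖y n - x n‖) atTop (nhds 0) := by
    have hcomb : Tendsto
        (fun n => ‖b 0 n • (x n - p) + (1 - b 0 n) • (vy n - p)‖) atTop (nhds d) := by
      have heq : (fun n => ‖b 0 n • (x n - p) + (1 - b 0 n) • (vy n - p)‖)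
          = fun n => ‖y n - p‖ := by
        funext n
        congr 1
        rw [hvy1 n]
        module
      rw [heq]
      exact hqd
    have hschu := stmt7_schu hblo hbhi1 (t := fun n => b 0 n) (fun n => hb 0 n)
      (u := fun n => x n - p) (v := fun n => vy n - p) hd0
      (fun η hη => by
        filter_upwards [hs'le η hη] with n h
        refine le_trans ?_ h
        have hrr : ‖x n - p‖ = r n := by simp [hrdef]
        rw [hrr]
        nlinarith [hr0 n, mul_nonneg (hK1n n) (hr0 n), hK2n n])
      (fun η hη => by
        filter_upwards [hs'le η hη] with n h
        exact le_trans (hvy2 n) h)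
      hcomb
    have hschu' : Tendsto (fun n => ‖x n - vy n‖) atTop (nhds 0) := by
      have heq : (fun n => ‖(x n - p) - (vy n - p)‖) = fun n => ‖x n - vy n‖ := by
        funext n
        rw [sub_sub_sub_cancel_right]
      rwa [heq] at hschu
    refine squeeze_zero (fun n => norm_nonneg _) (fun n => ?_) hschu'
    have h1 : y n - x n = (1 - b 0 n) • (vy n - x n) := by
      rw [hvy1 n]
      module
    rw [h1, norm_smul, Real.norm_eq_abs, abs_of_nonneg (by linarith [hb1 0 n]),
      norm_sub_rev]
    nlinarith [norm_nonneg (x n - vy n), hb0 0 n, hb1 0 n]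
  -- final assembly
  intro i
  have hA0 : ∀ n, 0 ≤ ‖y n - x n‖ + tμ i n * ψ i ‖y n - x n‖ + tlam i n := fun n =>
    add_nonneg (add_nonneg (norm_nonneg _)
      (mul_nonneg (htμ0 i n) (hψpos i _ (norm_nonneg _)))) (htlam0 i n)
  have hψc : Tendsto (fun n => ψ i ‖y n - x n‖) atTop (nhds 0) := by
    have hmem : Tendsto (fun n => ‖y n - x n‖) atTop (nhdsWithin 0 (Set.Ici 0)) := by
      rw [tendsto_nhdsWithin_iff]
      exact ⟨hyx, Eventually.of_forall fun n => norm_nonneg _⟩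
    have hcont := (hψcont i 0 Set.self_mem_Ici).tendsto
    have := hcont.comp hmem
    simp only [hψ0 i] at this
    exact this
  have hA : Tendsto (fun n => ‖y n - x n‖ + tμ i n * ψ i ‖y n - x n‖ + tlam i n)
      atTop (nhds 0) := by
    have := (hyx.add ((htμlim i).mul hψc)).add (htlamlim i)
    simpa using this
  have hφA : Tendsto
      (fun n => φ i (‖y n - x n‖ + tμ i n * ψ i ‖y n - x n‖ + tlam i n)) atTop (nhds 0) := by
    have hmem : Tendsto (fun n => ‖y n - x n‖ + tμ i n * ψ i ‖y n - x n‖ + tlam i n)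
        atTop (nhdsWithin 0 (Set.Ici 0)) := by
      rw [tendsto_nhdsWithin_iff]
      exact ⟨hA, Eventually.of_forall hA0⟩
    have hcont := (hφcont i 0 Set.self_mem_Ici).tendsto
    have := hcont.comp hmem
    simp only [hφ0 i] at this
    exact this
  have hTbound : ∀ n, ‖(T i)^[n] (y n) - (T i)^[n] (x n)‖ ≤
      (‖y n - x n‖ + tμ i n * ψ i ‖y n - x n‖ + tlam i n) +
      μ i n * φ i (‖y n - x n‖ + tμ i n * ψ i ‖y n - x n‖ + tlam i n) + lam i n := by
    intro n
    have h1 := hT' i n (y n) (hyK n) (x n) (hxK n)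
    have h2 : ‖(I i)^[n] (y n) - (I i)^[n] (x n)‖ ≤
        ‖y n - x n‖ + tμ i n * ψ i ‖y n - x n‖ + tlam i n :=
      hI' i n (y n) (hyK n) (x n) (hxK n)
    have h3 : φ i ‖(I i)^[n] (y n) - (I i)^[n] (x n)‖ ≤
        φ i (‖y n - x n‖ + tμ i n * ψ i ‖y n - x n‖ + tlam i n) :=
      (hφmono i).monotoneOn (Set.mem_Ici.2 (norm_nonneg _)) (Set.mem_Ici.2 (hA0 n)) h2
    have h4 := mul_le_mul_of_nonneg_left h3 (hμ0 i n)
    linarith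
  have hBlim : Tendsto (fun n =>
      (‖y n - x n‖ + tμ i n * ψ i ‖y n - x n‖ + tlam i n) +
      μ i n * φ i (‖y n - x n‖ + tμ i n * ψ i ‖y n - x n‖ + tlam i n) + lam i n)
      atTop (nhds 0) := by
    have := (hA.add ((hμlim i).mul hφA)).add (hlamlim i)
    simpa using this
  have hsum2 : Tendsto (fun n => ‖x n - (T i)^[n] (y n)‖ +
      ((‖y n - x n‖ + tμ i n * ψ i ‖y n - x n‖ + tlam i n) +
      μ i n * φ i (‖y n - x n‖ + tμ i n * ψ i ‖y n - x n‖ + tlam i n) + lam i n))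
      atTop (nhds 0) := by
    simpa using (hxT i).add hBlim
  refine squeeze_zero (fun n => norm_nonneg _) (fun n => ?_) hsum2
  have h5 : x n - (T i)^[n] (x n)
      = (x n - (T i)^[n] (y n)) + ((T i)^[n] (y n) - (T i)^[n] (x n)) := by abel
  rw [h5]
  have h6 := norm_add_le (x n - (T i)^[n] (y n)) ((T i)^[n] (y n) - (T i)^[n] (x n))
  linarith [hTbound n]
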